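/- arXiv:2509.14617 — 4 statements merged into one kernel-verified Lean document; each statement's English description precedes it below -/
import Mathlib

section
/- Let N be odd, and let S^(1),…,S^(N) be independent uniformly random hypervectors in {-1,+1}^D. Let C = [S^(1)+…+S^(N)] be their coordinatewise majority (the sum is never zero since N is odd). Then for each fixed n and each coordinate i, P(C_i ≠ S_i^(n)) = 1/2 − 2^{−N}·binom(N−1, (N−1)/2). -/
def pm (b : Bool) : ℤ := if b then 1 else -1

/-- Coordinatewise majority (sign of the sum) of N hypervectors; with N odd the sum
is never zero. -/
def maj {N D : ℕ} (S : Fin N → Fin D → ℤ) (i : Fin D) : ℤ :=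
  if 0 < ∑ k, S k i then 1 else -1

open Finset

/-- number of `true`s of a Boolean vector -/
def cnt {α : Type*} [Fintype α] (h : α → Bool) : ℕ :=
  (Finset.univ.filter (fun k => h k = true)).card

lemma sum_pm {α : Type*} [Fintype α] (h : α → Bool) :
    ∑ k, pm (h k) = 2 * (cnt h : ℤ) - Fintype.card α := by
  have : ∀ k, pm (h k) = 2 * (if h k = true then (1:ℤ) else 0) - 1 := by
    intro k; unfold pm; by_cases hk : h k <;> simp [hk]
  rw [Finset.sum_congr rfl (fun k _ => this k)]
  rw [Finset.sum_sub_distrib, ← Finset.mul_sum, Finset.sum_boole, Finset.sum_const]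
  simp [cnt, Finset.card_univ]

lemma card_cnt_eq {α : Type*} [Fintype α] [DecidableEq α] (t : ℕ) :
    (Finset.univ.filter (fun h : α → Bool => cnt h = t)).card
      = (Fintype.card α).choose t := by
  rw [← Finset.card_univ, ← Finset.card_powersetCard t (Finset.univ : Finset α)]
  apply Finset.card_bij (fun h _ => Finset.univ.filter (fun k => h k = true))
  · intro h hh
    simp only [Finset.mem_filter, Finset.mem_univ, true_and] at hh
    simp [Finset.mem_powersetCard, cnt] at *
    exact hh
  · intro h1 hh1 h2 hh2 he
    funext k
    have : k ∈ Finset.univ.filter (fun k => h1 k = true) ↔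
        k ∈ Finset.univ.filter (fun k => h2 k = true) := by rw [he]
    simp only [Finset.mem_filter, Finset.mem_univ, true_and] at this
    cases hk1 : h1 k <;> cases hk2 : h2 k <;> simp_all
  · intro s hs
    simp only [Finset.mem_powersetCard_univ] at hs
    refine ⟨fun k => k ∈ s, ?_, ?_⟩
    · rw [Finset.mem_filter]; refine ⟨Finset.mem_univ _, ?_⟩; simp [cnt, hs]
    · ext k; simp

/-- splitting a count over `Fin N → Bool` along coordinate `n` -/
lemma card_filter_split {N : ℕ} (n : Fin N) (P : (Fin N → Bool) → Prop) [DecidablePred P]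
    (Q : Bool → ({k : Fin N // k ≠ n} → Bool) → Prop)
    [∀ b, DecidablePred (Q b)]
    (hPQ : ∀ g, P g ↔ Q (g n) (fun k => g k.1)) :
    (Finset.univ.filter P).card
      = (Finset.univ.filter (Q true)).card + (Finset.univ.filter (Q false)).card := by
  rw [← Fintype.card_subtype, ← Fintype.card_subtype, ← Fintype.card_subtype]
  have e1 : {g : Fin N → Bool // P g} ≃ {p : Bool × ({k : Fin N // k ≠ n} → Bool) // Q p.1 p.2} :=
    (Equiv.funSplitAt n Bool).subtypeEquiv (fun g => by
      rw [hPQ g]; rfl)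
  have e2 := Equiv.subtypeProdEquivSigmaSubtype Q
  rw [Fintype.card_congr (e1.trans e2), Fintype.card_sigma, Fintype.sum_bool]

lemma choose_le_two_pow' (M t : ℕ) : M.choose t ≤ 2 ^ M := by
  rcases le_or_gt t M with h | h
  · calc M.choose t ≤ ∑ j ∈ Finset.range (M + 1), M.choose j :=
        Finset.single_le_sum (f := fun j => M.choose j) (fun _ _ => Nat.zero_le _)
          (Finset.mem_range.mpr (Nat.lt_succ_of_le h))
    _ = 2 ^ M := Nat.sum_range_choose M
  · rw [Nat.choose_eq_zero_of_lt h]; exact Nat.zero_le _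

/-- Step 1: reduce the count over all hypervector families to the count over the
single column `i`. -/
lemma colcard {N D : ℕ} (n : Fin N) (i : Fin D) :
    (Finset.univ.filter (fun f : Fin N → Fin D → Bool =>
        maj (fun k j => pm (f k j)) i ≠ pm (f n i))).card
      = (Finset.univ.filter (fun g : Fin N → Bool =>
          (if 0 < ∑ k, pm (g k) then (1:ℤ) else -1) ≠ pm (g n))).card * 2 ^ (N * (D - 1)) := by
  have hpred : ∀ f : Fin N → Fin D → Bool,
      (maj (fun k j => pm (f k j)) i ≠ pm (f n i)) ↔
        (if 0 < ∑ k, pm (f k i) then (1:ℤ) else -1) ≠ pm (f n i) := by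
    intro f; unfold maj; rfl
  rw [← Fintype.card_subtype, ← Fintype.card_subtype]
  have e : {f : Fin N → Fin D → Bool // maj (fun k j => pm (f k j)) i ≠ pm (f n i)}
      ≃ {g : Fin N → Bool // (if 0 < ∑ k, pm (g k) then (1:ℤ) else -1) ≠ pm (g n)}
        × (Fin N → {j : Fin D // j ≠ i} → Bool) :=
    { toFun := fun f => (⟨fun k => f.1 k i, (hpred f.1).mp f.2⟩, fun k j => f.1 k j.1)
      invFun := fun p => ⟨fun k j => if h : j = i then p.1.1 k else p.2 k ⟨j, h⟩, by
        apply (hpred _).mpr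
        simpa using p.1.2⟩
      left_inv := fun f => by
        apply Subtype.ext; funext k j
        by_cases h : j = i <;> simp [h]
      right_inv := fun p => by
        refine Prod.ext (Subtype.ext ?_) ?_
        · funext k; simp
        · funext k j; simp [j.2] }
  rw [Fintype.card_congr e, Fintype.card_prod]
  congr 1
  rw [Fintype.card_fun, Fintype.card_fun, Fintype.card_bool, Fintype.card_subtype]
  rw [Finset.filter_ne', Finset.card_erase_of_mem (Finset.mem_univ i), Finset.card_univ,
    Fintype.card_fin, ← pow_mul, Nat.mul_comm]
  simp

/-- Step 2: count the disagreeing column vectors. -/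
lemma colcount {N : ℕ} (m : ℕ) (hm : N = 2 * m + 1) (n : Fin N) :
    (Finset.univ.filter (fun g : Fin N → Bool =>
        (if 0 < ∑ k, pm (g k) then (1:ℤ) else -1) ≠ pm (g n))).card
      = 2 ^ (2*m) - Nat.choose (2*m) m := by
  have hcard_ne : Fintype.card {k : Fin N // k ≠ n} = 2 * m := by
    rw [Fintype.card_subtype, Finset.filter_ne', Finset.card_erase_of_mem (Finset.mem_univ n),
      Finset.card_univ, Fintype.card_fin, hm]
    omega
  have hcnt : ∀ g : Fin N → Bool,
      ((if 0 < ∑ k, pm (g k) then (1:ℤ) else -1) ≠ pm (g n))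
        ↔ ((g n = true ∧ cnt (fun k : {k : Fin N // k ≠ n} => g k.1) < m)
          ∨ (g n = false ∧ m < cnt (fun k : {k : Fin N // k ≠ n} => g k.1))) := by
    intro g
    have hsum : ∑ k, pm (g k) = pm (g n) + ∑ k : {k : Fin N // k ≠ n}, pm (g k.1) := by
      rw [← Finset.sum_subtype (Finset.univ.erase n)
          (fun k => by simp [Finset.mem_erase]) (fun k => pm (g k))]
      exact (Finset.add_sum_erase _ _ (Finset.mem_univ n)).symm
    rw [hsum, sum_pm, hcard_ne]
    clear hsum
    set c := cnt (fun k : {k : Fin N // k ≠ n} => g k.1) with hc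
    clear_value c
    cases hgn : g n
    · have hL : pm false = -1 := rfl
      simp only [hgn, hL]
      by_cases hlt : (0:ℤ) < -1 + (2 * (c:ℤ) - ((2*m : ℕ) : ℤ))
      · rw [if_pos hlt]
        have hmc : m < c := by omega
        simp [hmc]
      · rw [if_neg hlt]
        have hmc : ¬ m < c := by omega
        simp [hmc]
    · have hL : pm true = 1 := rfl
      simp only [hgn, hL]
      by_cases hlt : (0:ℤ) < 1 + (2 * (c:ℤ) - ((2*m : ℕ) : ℤ))
      · rw [if_pos hlt]
        have hmc : ¬ c < m := by omega
        simp [hmc]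
      · rw [if_neg hlt]
        have hmc : c < m := by omega
        simp [hmc]
  have hQt : (Finset.univ.filter (fun h : {k : Fin N // k ≠ n} → Bool =>
      (true = true ∧ cnt h < m) ∨ (true = false ∧ m < cnt h))).card
      = (Finset.univ.filter (fun h : {k : Fin N // k ≠ n} → Bool => cnt h < m)).card := by
    congr 1; apply Finset.filter_congr; intro h _; simp
  have hQf : (Finset.univ.filter (fun h : {k : Fin N // k ≠ n} → Bool =>
      (false = true ∧ cnt h < m) ∨ (false = false ∧ m < cnt h))).card
      = (Finset.univ.filter (fun h : {k : Fin N // k ≠ n} → Bool => m < cnt h)).card := by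
    congr 1; apply Finset.filter_congr; intro h _; simp
  -- trichotomy counting
  have htri : (Finset.univ.filter (fun h : {k : Fin N // k ≠ n} → Bool => cnt h < m)).card
      + (Finset.univ.filter (fun h : {k : Fin N // k ≠ n} → Bool => m < cnt h)).card
      = 2 ^ (2*m) - Nat.choose (2*m) m := by
    have h1 : (Finset.univ.filter (fun h : {k : Fin N // k ≠ n} → Bool => cnt h = m)).card
        + (Finset.univ.filter (fun h : {k : Fin N // k ≠ n} → Bool => ¬ (cnt h = m))).card
        = Fintype.card ({k : Fin N // k ≠ n} → Bool) := by
      rw [← Finset.card_univ]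
      exact Finset.card_filter_add_card_filter_not _
    have h2 : (Finset.univ.filter (fun h : {k : Fin N // k ≠ n} → Bool => ¬ (cnt h = m)))
        = (Finset.univ.filter (fun h : {k : Fin N // k ≠ n} → Bool => cnt h < m))
          ∪ (Finset.univ.filter (fun h : {k : Fin N // k ≠ n} → Bool => m < cnt h)) := by
      rw [← Finset.filter_or]
      apply Finset.filter_congr; intro h _; constructor <;> intro <;> omega
    have h3 : Disjoint (Finset.univ.filter (fun h : {k : Fin N // k ≠ n} → Bool => cnt h < m))
        (Finset.univ.filter (fun h : {k : Fin N // k ≠ n} → Bool => m < cnt h)) := by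
      apply Finset.disjoint_filter_filter'
      rw [disjoint_iff_inf_le]; intro h hh; simp at hh; omega
    have h4 := card_cnt_eq (α := {k : Fin N // k ≠ n}) m
    rw [hcard_ne] at h4
    have h5 : Fintype.card ({k : Fin N // k ≠ n} → Bool) = 2 ^ (2*m) := by
      rw [Fintype.card_fun, Fintype.card_bool, hcard_ne]
    rw [h2, Finset.card_union_of_disjoint h3, h4, h5] at h1
    omega
  have hsplit := card_filter_split n
    (fun g : Fin N → Bool => (if 0 < ∑ k, pm (g k) then (1:ℤ) else -1) ≠ pm (g n))
    (fun b h => (b = true ∧ cnt h < m) ∨ (b = false ∧ m < cnt h)) hcnt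
  rw [hsplit, hQt, hQf, htri]

/-- For N odd and S^(1),…,S^(N) independent uniformly random hypervectors with
coordinatewise majority C, for each fixed n and coordinate i,
P(C_i ≠ S_i^(n)) = 1/2 − 2^{−N}·binom(N−1,(N−1)/2). -/
theorem stmt6 (N D : ℕ) (hN : Odd N) (n : Fin N) (i : Fin D) :
    ((Finset.univ.filter (fun f : Fin N → Fin D → Bool =>
        maj (fun k j => pm (f k j)) i ≠ pm (f n i))).card : ℝ)
      / (Fintype.card (Fin N → Fin D → Bool) : ℝ)
    = 1/2 - (2 : ℝ) ^ (-(N : ℤ)) * (Nat.choose (N - 1) ((N - 1) / 2) : ℝ) := by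
  obtain ⟨m, hm⟩ := hN
  have hD : 0 < D := i.pos
  have hNm : N - 1 = 2 * m := by omega
  have hNm2 : (N - 1) / 2 = m := by omega
  have hND : N * D = N + N * (D - 1) := by
    have h1 : D = 1 + (D - 1) := by omega
    calc N * D = N * (1 + (D-1)) := by rw [← h1]
    _ = N + N * (D-1) := by ring
  have hle := choose_le_two_pow' (2*m) m
  have hcardfun : (Fintype.card (Fin N → Fin D → Bool) : ℝ) = 2 ^ (N * D) := by
    rw [Fintype.card_fun, Fintype.card_fun, Fintype.card_bool, Fintype.card_fin,
      Fintype.card_fin, ← pow_mul, Nat.mul_comm]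
    push_cast; ring
  rw [hNm2, hNm, colcard n i, colcount m hm n, hcardfun]
  push_cast [Nat.cast_sub hle]
  rw [hND, pow_add]
  have h2N : (2:ℝ) ^ N = 2 * 2 ^ (2*m) := by
    rw [hm]; ring
  have hz : (2:ℝ) ^ (-(N:ℤ)) = ((2:ℝ) ^ N)⁻¹ := by
    rw [zpow_neg, zpow_natCast]
  rw [hz, h2N]
  have hpos1 : (0:ℝ) < 2 ^ (2*m) := by positivity
  have hpos2 : (0:ℝ) < 2 ^ (N * (D-1)) := by positivity
  field_simp
end

section
/- Let N be odd and S^(1),…,S^(N) be independent uniformly random hypervectors in {-1,+1}^D with coordinatewise majority C = [S^(1)+…+S^(N)]. Then d_H(C, S^(n)) is distributed as (1/D)·Binomial(D, 1/2 − p(N)) where p(N) = 2^{−N}·binom(N−1,(N−1)/2); in particular E[d_H(C, S^(n))] = 1/2 − p(N) < 1/2. -/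
noncomputable def hdist {D : ℕ} (A B : Fin D → ℤ) : ℝ :=
  ((Finset.univ.filter (fun i => A i ≠ B i)).card : ℝ) / D

def badP {N : ℕ} (n : Fin N) (v : Fin N → Bool) : Prop :=
  (if 0 < ∑ k, pm (v k) then (1:ℤ) else -1) ≠ pm (v n)

instance {N : ℕ} (n : Fin N) : DecidablePred (badP n) := fun v => by
  unfold badP; infer_instance

lemma sum_pm_s7 {N : ℕ} (v : Fin N → Bool) :
    ∑ k, pm (v k) = 2 * ((Finset.univ.filter (fun k => v k = true)).card : ℤ) - N := by
  have : ∀ k, pm (v k) = 2 * (if v k = true then (1:ℤ) else 0) - 1 := by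
    intro k; unfold pm; cases v k <;> simp
  rw [Finset.sum_congr rfl (fun k _ => this k)]
  rw [Finset.sum_sub_distrib, ← Finset.mul_sum, Finset.sum_boole]
  simp [mul_comm]

lemma ite_ne_ite (P Q : Prop) [Decidable P] (hPQ : P ↔ Q) (b : Bool) :
    ((if P then (1:ℤ) else -1) ≠ (if b then 1 else -1)) ↔ ¬ (Q ↔ b = true) := by
  cases b <;> split_ifs with hc <;> rw [hPQ] at hc <;> simp_all

lemma badP_iff {N : ℕ} (n : Fin N) (v : Fin N → Bool) :
    badP n v ↔ ¬ (N < 2 * (Finset.univ.filter (fun k => v k = true)).card ↔ v n = true) := by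
  have h1 : (0 < ∑ k, pm (v k)) ↔ N < 2 * (Finset.univ.filter (fun k => v k = true)).card := by
    rw [sum_pm_s7]
    constructor <;> intro h
    · exact_mod_cast (by linarith : (N:ℤ) < 2 * ((Finset.univ.filter (fun k => v k = true)).card : ℤ))
    · have : (N:ℤ) < 2 * ((Finset.univ.filter (fun k => v k = true)).card : ℤ) := by exact_mod_cast h
      linarith
  unfold badP
  exact ite_ne_ite _ _ h1 (v n)

lemma bad_card {N : ℕ} (hN : Odd N) (n : Fin N) :
    (Finset.univ.filter (badP n)).card + (N-1).choose ((N-1)/2) = 2^(N-1) := by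
  classical
  obtain ⟨r, hr⟩ := hN
  -- transfer to finsets
  have hb : (Finset.univ.filter (badP n)).card
      = (Finset.univ.filter (fun s : Finset (Fin N) => ¬(N < 2 * s.card ↔ n ∈ s))).card := by
    refine Finset.card_bij' (fun v _ => Finset.univ.filter (fun k => v k = true))
      (fun s _ => fun k => decide (k ∈ s)) ?hi ?hj ?hli ?hri
    case hi =>
      intro v hv
      rw [Finset.mem_filter] at hv ⊢
      refine ⟨Finset.mem_univ _, ?_⟩
      have := (badP_iff n v).mp hv.2
      simpa using this
    case hj =>
      intro s hs
      rw [Finset.mem_filter] at hs ⊢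
      refine ⟨Finset.mem_univ _, ?_⟩
      rw [badP_iff]
      have h1 : Finset.univ.filter (fun k => decide (k ∈ s) = true) = s := by
        ext k; simp
      rw [h1]
      simpa using hs.2
    case hli => intro v _; funext k; simp
    case hri => intro s _; ext k; simp
  rw [hb]
  -- split into two disjoint cases
  have hsplit : (Finset.univ.filter (fun s : Finset (Fin N) => ¬(N < 2 * s.card ↔ n ∈ s)))
      = (Finset.univ.filter (fun s : Finset (Fin N) => n ∈ s ∧ ¬ N < 2 * s.card))
        ∪ (Finset.univ.filter (fun s : Finset (Fin N) => n ∉ s ∧ N < 2 * s.card)) := by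
    rw [← Finset.filter_or]
    apply Finset.filter_congr
    intro s _; constructor <;> intro h <;> tauto
  rw [hsplit, Finset.card_union_of_disjoint (by
    rw [Finset.disjoint_left]; intro s hs1 hs2
    rw [Finset.mem_filter] at hs1 hs2; tauto)]
  -- complement bijection between the two cases
  have hcompl : (Finset.univ.filter (fun s : Finset (Fin N) => n ∈ s ∧ ¬ N < 2 * s.card)).card
      = (Finset.univ.filter (fun s : Finset (Fin N) => n ∉ s ∧ N < 2 * s.card)).card := by
    refine Finset.card_bij' (fun s _ => sᶜ) (fun s _ => sᶜ) ?hi ?hj ?hli ?hri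
    case hi =>
      intro s hs
      rw [Finset.mem_filter] at hs ⊢
      obtain ⟨-, h1, h2⟩ := hs
      have hc := Finset.card_le_univ s
      rw [Fintype.card_fin] at hc
      refine ⟨Finset.mem_univ _, ?_, ?_⟩
      · simp [h1]
      · show N < 2 * sᶜ.card
        rw [Finset.card_compl, Fintype.card_fin]; omega
    case hj =>
      intro s hs
      rw [Finset.mem_filter] at hs ⊢
      obtain ⟨-, h1, h2⟩ := hs
      have hc := Finset.card_le_univ s
      rw [Fintype.card_fin] at hc
      refine ⟨Finset.mem_univ _, ?_, ?_⟩
      · simp [h1]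
      · show ¬ N < 2 * sᶜ.card
        rw [Finset.card_compl, Fintype.card_fin]; omega
    case hli => intro s _; simp
    case hri => intro s _; simp
  rw [hcompl]
  -- count the second case by cardinality
  have hcount : (Finset.univ.filter (fun s : Finset (Fin N) => n ∉ s ∧ N < 2 * s.card))
      = (Finset.univ.erase n).powerset.filter (fun s => N < 2 * s.card) := by
    ext s
    simp only [Finset.mem_filter, Finset.mem_univ, true_and, Finset.mem_powerset,
      Finset.subset_erase, Finset.subset_univ]
    try tauto
  rw [hcount]
  have herase : (Finset.univ.erase n).card = N - 1 := by
    rw [Finset.card_erase_of_mem (Finset.mem_univ n), Finset.card_univ, Fintype.card_fin]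
  have hfib : ((Finset.univ.erase n).powerset.filter (fun s => N < 2 * s.card)).card
      = ∑ t ∈ Finset.range N, if N < 2 * t then (N-1).choose t else 0 := by
    rw [Finset.card_eq_sum_card_fiberwise (f := Finset.card) (t := Finset.range N) (by
      intro s hs
      rw [Finset.mem_coe, Finset.mem_filter, Finset.mem_powerset] at hs
      have := Finset.card_le_card hs.1
      rw [herase] at this
      rw [Finset.mem_coe, Finset.mem_range]; omega)]
    apply Finset.sum_congr rfl
    intro t _
    rw [Finset.filter_filter]
    split_ifs with ht
    · have heq : (Finset.univ.erase n).powerset.filter (fun s => N < 2 * s.card ∧ s.card = t)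
          = Finset.powersetCard t (Finset.univ.erase n) := by
        ext s
        simp only [Finset.mem_filter, Finset.mem_powerset, Finset.mem_powersetCard]
        constructor
        · rintro ⟨h1, _, h3⟩; exact ⟨h1, h3⟩
        · rintro ⟨h1, h2⟩; exact ⟨h1, by omega, h2⟩
      rw [heq, Finset.card_powersetCard, herase]
    · rw [Finset.card_eq_zero, Finset.eq_empty_iff_forall_notMem]
      intro s hs
      rw [Finset.mem_filter] at hs
      omega
  rw [hfib]
  -- arithmetic
  have hNr : N - 1 = 2 * r := by omega
  have hNr2 : (N-1)/2 = r := by omega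
  rw [hNr2, hNr]
  have hR : (Finset.range N) = Finset.range (2*r + 1) := by rw [hr]
  rw [hR]
  have hS1 : ∀ t ∈ Finset.range (2*r+1),
      (if N < 2*t then (2*r).choose t else 0) = (if r < t then (2*r).choose t else 0) := by
    intro t _
    have h : (N < 2*t) ↔ (r < t) := by omega
    simp only [h]
  rw [Finset.sum_congr rfl hS1]
  have hrefl : (∑ t ∈ Finset.range (2*r+1), if t < r then (2*r).choose t else 0)
      = ∑ t ∈ Finset.range (2*r+1), if r < t then (2*r).choose t else 0 := by
    rw [← Finset.sum_filter, ← Finset.sum_filter]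
    refine Finset.sum_nbij' (fun t => 2*r - t) (fun t => 2*r - t) ?_ ?_ ?_ ?_ ?_
    · intro t ht; simp only [Finset.mem_filter, Finset.mem_range] at ht ⊢; omega
    · intro t ht; simp only [Finset.mem_filter, Finset.mem_range] at ht ⊢; omega
    · intro t ht; simp only [Finset.mem_filter, Finset.mem_range] at ht
      show 2*r - (2*r - t) = t; omega
    · intro t ht; simp only [Finset.mem_filter, Finset.mem_range] at ht
      show 2*r - (2*r - t) = t; omega
    · intro t ht
      simp only [Finset.mem_filter, Finset.mem_range] at ht
      show (2*r).choose t = (2*r).choose (2*r - t)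
      rw [Nat.choose_symm (by omega)]
  have htri : ∀ t ∈ Finset.range (2*r+1), (2*r).choose t
      = (if r < t then (2*r).choose t else 0) + (if t < r then (2*r).choose t else 0)
        + (if t = r then (2*r).choose t else 0) := by
    intro t _
    rcases lt_trichotomy t r with h|h|h
    · simp [h, Nat.lt_asymm h, ne_of_lt h, Nat.lt_irrefl]
    · simp [h]
    · simp [h, Nat.lt_asymm h, ne_of_gt h]
  have hsum := Nat.sum_range_choose (2*r)
  rw [Finset.sum_congr rfl htri, Finset.sum_add_distrib, Finset.sum_add_distrib,
    Finset.sum_ite_eq' (Finset.range (2*r+1)) r] at hsum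
  simp only [Finset.mem_range, Nat.lt_succ_iff, Nat.le_refl, if_pos, le_refl] at hsum
  rw [hrefl] at hsum
  rw [if_pos (by omega : r ≤ 2 * r)] at hsum
  omega

lemma count_binom {D : ℕ} {V : Type*} [Fintype V] [DecidableEq V] (P : V → Prop)
    [DecidablePred P] (m : ℕ) :
    (Finset.univ.filter (fun g : Fin D → V =>
        (Finset.univ.filter (fun i => P (g i))).card = m)).card
      = D.choose m * (Finset.univ.filter P).card ^ m
        * (Finset.univ.filter (fun v => ¬ P v)).card ^ (D - m) := by
  classical
  set B := Finset.univ.filter P with hB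
  set G := Finset.univ.filter (fun v => ¬ P v) with hG
  rw [Finset.card_eq_sum_card_fiberwise
      (f := fun g : Fin D → V => Finset.univ.filter (fun i => P (g i)))
      (t := Finset.powersetCard m Finset.univ)
      (by intro g hg; rw [Finset.mem_coe, Finset.mem_filter] at hg
          exact Finset.mem_powersetCard.mpr ⟨Finset.subset_univ _, hg.2⟩)]
  have hfiber : ∀ s ∈ Finset.powersetCard m (Finset.univ : Finset (Fin D)),
      ((Finset.univ.filter (fun g : Fin D → V =>
          (Finset.univ.filter (fun i => P (g i))).card = m)).filter
        (fun g => Finset.univ.filter (fun i => P (g i)) = s)).card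
      = B.card ^ m * G.card ^ (D - m) := by
    intro s hs
    rw [Finset.mem_powersetCard] at hs
    have h1 : (Finset.univ.filter (fun g : Fin D → V =>
          (Finset.univ.filter (fun i => P (g i))).card = m)).filter
        (fun g => Finset.univ.filter (fun i => P (g i)) = s)
        = Fintype.piFinset (fun i => if i ∈ s then B else G) := by
      ext g
      simp only [Finset.filter_filter, Finset.mem_filter, Finset.mem_univ, true_and,
        Fintype.mem_piFinset]
      constructor
      · rintro ⟨-, h2⟩
        intro i
        by_cases hi : i ∈ s
        · rw [if_pos hi]
          have hh := hi; rw [← h2, Finset.mem_filter] at hh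
          rw [hB, Finset.mem_filter]
          exact ⟨Finset.mem_univ _, hh.2⟩
        · rw [if_neg hi]
          have hh : ¬ P (g i) := fun hP =>
            hi (by rw [← h2, Finset.mem_filter]; exact ⟨Finset.mem_univ _, hP⟩)
          rw [hG, Finset.mem_filter]
          exact ⟨Finset.mem_univ _, hh⟩
      · intro h
        have h2 : Finset.univ.filter (fun i => P (g i)) = s := by
          ext i
          rw [Finset.mem_filter]
          constructor
          · rintro ⟨-, hP⟩
            by_contra hi
            have hh := h i; rw [if_neg hi, hG, Finset.mem_filter] at hh
            exact hh.2 hP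
          · intro hi
            have hh := h i; rw [if_pos hi, hB, Finset.mem_filter] at hh
            exact ⟨Finset.mem_univ _, hh.2⟩
        exact ⟨by rw [h2, hs.2], h2⟩
    rw [h1, Fintype.card_piFinset]
    rw [← Finset.prod_sdiff (Finset.subset_univ s)]
    have e1 : ∀ i ∈ Finset.univ \ s, (if i ∈ s then B else G).card = G.card := by
      intro i hi
      rw [Finset.mem_sdiff] at hi
      rw [if_neg hi.2]
    have e2 : ∀ i ∈ s, (if i ∈ s then B else G).card = B.card := by
      intro i hi; rw [if_pos hi]
    rw [Finset.prod_congr rfl e1, Finset.prod_congr rfl e2, Finset.prod_const,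
      Finset.prod_const, Finset.card_sdiff_of_subset (Finset.subset_univ s), Finset.card_univ,
      Fintype.card_fin, hs.2]
    ring
  rw [Finset.sum_congr rfl hfiber, Finset.sum_const, smul_eq_mul,
    Finset.card_powersetCard, Finset.card_univ, Fintype.card_fin, mul_assoc]

lemma swap_filter_card {N D : ℕ} (Pf : (Fin N → Fin D → Bool) → Prop) [DecidablePred Pf]
    (Pg : (Fin D → Fin N → Bool) → Prop) [DecidablePred Pg]
    (h : ∀ f, Pf f ↔ Pg (fun i k => f k i)) :
    (Finset.univ.filter Pf).card = (Finset.univ.filter Pg).card := by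
  refine Finset.card_bij' (fun f _ => fun i k => f k i) (fun g _ => fun k i => g i k)
    ?_ ?_ ?_ ?_
  · intro f hf
    rw [Finset.mem_filter] at hf ⊢
    exact ⟨Finset.mem_univ _, (h f).mp hf.2⟩
  · intro g hg
    rw [Finset.mem_filter] at hg ⊢
    exact ⟨Finset.mem_univ _, (h _).mpr hg.2⟩
  · intro f _; rfl
  · intro g _; rfl

lemma single_count {N D : ℕ} (n : Fin N) (i : Fin D) :
    (Finset.univ.filter (fun g : Fin D → (Fin N → Bool) => badP n (g i))).card
      = (Finset.univ.filter (badP n)).card * (2^N)^(D-1) := by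
  classical
  have h1 : Finset.univ.filter (fun g : Fin D → (Fin N → Bool) => badP n (g i))
      = Fintype.piFinset (fun j => if j = i then Finset.univ.filter (badP n)
          else Finset.univ) := by
    ext g
    simp only [Finset.mem_filter, Finset.mem_univ, true_and, Fintype.mem_piFinset]
    constructor
    · intro h j
      by_cases hj : j = i
      · subst hj; rw [if_pos rfl, Finset.mem_filter]; exact ⟨Finset.mem_univ _, h⟩
      · rw [if_neg hj]; exact Finset.mem_univ _
    · intro h
      have hh := h i; rw [if_pos rfl, Finset.mem_filter] at hh; exact hh.2
  rw [h1, Fintype.card_piFinset,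
    ← Finset.mul_prod_erase Finset.univ _ (Finset.mem_univ i)]
  rw [if_pos rfl]
  congr 1
  have h2 : ∀ j ∈ Finset.univ.erase i,
      (if j = i then Finset.univ.filter (badP n) else (Finset.univ : Finset (Fin N → Bool))).card
        = 2^N := by
    intro j hj
    rw [Finset.mem_erase] at hj
    rw [if_neg hj.1, Finset.card_univ]
    simp [Fintype.card_fun]
  rw [Finset.prod_congr rfl h2, Finset.prod_const,
    Finset.card_erase_of_mem (Finset.mem_univ i), Finset.card_univ, Fintype.card_fin]

/-- With N odd and S^(1),…,S^(N) independent uniformly random hypervectors and C their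
coordinatewise majority, d_H(C, S^(n)) is distributed as (1/D)·Binomial(D, 1/2 − p(N))
with p(N) = 2^{−N}·binom(N−1,(N−1)/2); in particular
E[d_H(C, S^(n))] = 1/2 − p(N) < 1/2. -/
theorem stmt7 (N D : ℕ) (hN : Odd N) (hD : 0 < D) (n : Fin N) :
    let p : ℝ := (2 : ℝ) ^ (-(N : ℤ)) * (Nat.choose (N - 1) ((N - 1) / 2) : ℝ)
    (∀ m : ℕ,
      ((Finset.univ.filter (fun f : Fin N → Fin D → Bool =>
          (Finset.univ.filter (fun i : Fin D =>
            maj (fun k j => pm (f k j)) i ≠ pm (f n i))).card = m)).card : ℝ)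
        / (Fintype.card (Fin N → Fin D → Bool) : ℝ)
      = (D.choose m : ℝ) * (1/2 - p) ^ m * (1/2 + p) ^ (D - m))
    ∧ (∑ f : Fin N → Fin D → Bool,
          hdist (maj (fun k j => pm (f k j))) (fun i => pm (f n i)))
        / (Fintype.card (Fin N → Fin D → Bool) : ℝ) = 1/2 - p
    ∧ 1/2 - p < 1/2 := by
  intro p
  classical
  set B := (Finset.univ.filter (badP n)).card with hBdef
  set c := (N-1).choose ((N-1)/2) with hcdef
  set Gc := (Finset.univ.filter (fun v => ¬ badP n v)).card with hGdef
  have hBc : B + c = 2^(N-1) := bad_card hN n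
  have hN1 : 1 ≤ N := hN.pos
  have hp : p = (2:ℝ)^(-(N:ℤ)) * c := rfl
  have h2N : (0:ℝ) < 2^N := by positivity
  have hcp : (c:ℝ) = 2^N * p := by
    rw [hp, zpow_neg, zpow_natCast]
    field_simp
  have hBcast : (B:ℝ) + c = 2^(N-1) := by exact_mod_cast hBc
  have h2pow : (2:ℝ)^(N-1) * 2 = 2^N := by
    rw [← pow_succ]; congr 1; omega
  have hBr : (B:ℝ) = 2^N * (1/2 - p) := by
    have : (2:ℝ)^N * (1/2 - p) = 2^(N-1) - 2^N * p := by linarith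
    rw [this]; linarith [hcp, hBcast]
  have hBG : B + Gc = 2^N := by
    rw [hBdef, hGdef, Finset.card_filter_add_card_filter_not, Finset.card_univ]
    simp [Fintype.card_fun]
  have hBGcast : (B:ℝ) + Gc = 2^N := by exact_mod_cast hBG
  have hGr : (Gc:ℝ) = 2^N * (1/2 + p) := by
    have : (2:ℝ)^N * (1/2 + p) = 2^N - 2^N * (1/2 - p) := by ring
    rw [this]; linarith
  have htotn : Fintype.card (Fin N → Fin D → Bool) = (2^N)^D := by
    simp only [Fintype.card_fun, Fintype.card_fin, Fintype.card_bool]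
    rw [← pow_mul, ← pow_mul, mul_comm]
  have htot : (Fintype.card (Fin N → Fin D → Bool) : ℝ) = ((2:ℝ)^N)^D := by
    rw [htotn]; push_cast; ring
  refine ⟨?_, ?_, ?_⟩
  · -- distribution
    intro m
    have hcount : (Finset.univ.filter (fun f : Fin N → Fin D → Bool =>
          (Finset.univ.filter (fun i : Fin D =>
            maj (fun k j => pm (f k j)) i ≠ pm (f n i))).card = m)).card
        = D.choose m * B^m * Gc^(D-m) := by
      have hswap := swap_filter_card
        (Pf := fun f : Fin N → Fin D → Bool =>
          (Finset.univ.filter (fun i : Fin D =>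
            maj (fun k j => pm (f k j)) i ≠ pm (f n i))).card = m)
        (Pg := fun g : Fin D → (Fin N → Bool) =>
          (Finset.univ.filter (fun i => badP n (g i))).card = m)
        (fun f => Iff.rfl)
      exact hswap.trans (count_binom (badP n) m)
    rw [hcount, htot]
    push_cast
    rcases le_or_gt m D with hm | hm
    · rw [hBr, hGr]
      have hmm : m + (D - m) = D := Nat.add_sub_cancel' hm
      have hsplit : ((2:ℝ)^N)^m * ((2:ℝ)^N)^(D-m) = ((2:ℝ)^N)^D := by
        rw [← pow_add, hmm]
      rw [div_eq_iff (by positivity)]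
      rw [mul_pow, mul_pow, ← hsplit]
      ring
    · rw [Nat.choose_eq_zero_of_lt hm]
      simp
  · -- expectation
    have hhd : ∀ f : Fin N → Fin D → Bool,
        hdist (maj (fun k j => pm (f k j))) (fun i => pm (f n i))
          = ((Finset.univ.filter (fun i : Fin D =>
              maj (fun k j => pm (f k j)) i ≠ pm (f n i))).card : ℝ) / D := fun f => rfl
    rw [Finset.sum_congr rfl (fun f _ => hhd f), ← Finset.sum_div]
    have hsum : (∑ f : Fin N → Fin D → Bool,
        ((Finset.univ.filter (fun i : Fin D =>
            maj (fun k j => pm (f k j)) i ≠ pm (f n i))).card : ℝ))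
        = ((D * (B * (2^N)^(D-1)) : ℕ) : ℝ) := by
      rw [← Nat.cast_sum]
      congr 1
      rw [Finset.sum_congr rfl (fun f _ => Finset.card_filter _ _), Finset.sum_comm]
      have hinner : ∀ i : Fin D,
          (∑ f : Fin N → Fin D → Bool,
            if maj (fun k j => pm (f k j)) i ≠ pm (f n i) then 1 else 0)
          = B * (2^N)^(D-1) := by
        intro i
        rw [← Finset.card_filter]
        have hswap := swap_filter_card
          (Pf := fun f : Fin N → Fin D → Bool =>
            maj (fun k j => pm (f k j)) i ≠ pm (f n i))
          (Pg := fun g : Fin D → (Fin N → Bool) => badP n (g i))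
          (fun f => Iff.rfl)
        exact hswap.trans (single_count n i)
      rw [Finset.sum_congr rfl (fun i _ => hinner i), Finset.sum_const, Finset.card_univ,
        Fintype.card_fin, smul_eq_mul]
    rw [hsum, htot]
    push_cast
    rw [hBr]
    have hpow : ((2:ℝ)^N)^D = ((2:ℝ)^N)^(D-1) * (2^N) := by
      rw [← pow_succ]; congr 1; omega
    rw [hpow]
    have hD' : (D:ℝ) ≠ 0 := Nat.cast_ne_zero.mpr hD.ne'
    field_simp
  · -- strict inequality
    have hc0 : 0 < c := Nat.choose_pos (Nat.div_le_self _ _)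
    have : 0 < p := by
      rw [hp]
      have : (0:ℝ) < c := by exact_mod_cast hc0
      positivity
    linarith
end

section
/- Let N be odd, S^(1),…,S^(N),S* be independent uniformly random hypervectors in {-1,+1}^D and C their coordinatewise majority. Then for each fixed n, P(d_H(C, S^(n)) < d_H(C, S*)) → 1 as D → ∞. -/
open Filter Finset

lemma sum_sq_mul (α : Type) [Fintype α] (g : α → ℝ) (hg : ∑ a, g a = 0) :
    ∀ D : ℕ, (∑ ω : Fin D → α, (∑ i, g (ω i))^2) * (Fintype.card α : ℝ) =
      D * (Fintype.card α : ℝ)^D * ∑ a, (g a)^2 := by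
  intro D
  induction D with
  | zero => simp
  | succ D ih =>
    have h1 : ∑ ω : Fin (D+1) → α, (∑ i, g (ω i))^2
        = ∑ p : α × (Fin D → α), (g p.1 + ∑ i, g (p.2 i))^2 := by
      rw [← Equiv.sum_comp (Fin.consEquiv (fun _ : Fin (D+1) => α))
        (fun ω => (∑ i, g (ω i))^2)]
      apply Finset.sum_congr rfl
      intro p _
      congr 1
      rw [show ((Fin.consEquiv (fun _ : Fin (D+1) => α)) p) = Fin.cons p.1 p.2 from rfl,
        Fin.sum_univ_succ]
      simp
    have h2 : ∀ a : α, ∑ ω : Fin D → α, (g a + ∑ i, g (ω i))^2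
        = (Fintype.card α : ℝ)^D * g a^2
          + 2 * g a * (∑ ω : Fin D → α, ∑ i, g (ω i))
          + ∑ ω : Fin D → α, (∑ i, g (ω i))^2 := by
      intro a
      have e : ∀ ω : Fin D → α, (g a + ∑ i, g (ω i))^2
          = g a^2 + 2*g a*(∑ i, g (ω i)) + (∑ i, g (ω i))^2 := fun ω => by ring
      rw [Finset.sum_congr rfl (fun ω _ => e ω), Finset.sum_add_distrib,
        Finset.sum_add_distrib, Finset.sum_const, ← Finset.mul_sum, Finset.card_univ,
        Fintype.card_fun, nsmul_eq_mul]
      simp only [Fintype.card_fin]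
      push_cast
      ring
    rw [h1, Fintype.sum_prod_type]
    rw [Finset.sum_congr rfl (fun a _ => h2 a), Finset.sum_add_distrib,
      Finset.sum_add_distrib, ← Finset.mul_sum, Finset.sum_const, Finset.card_univ,
      nsmul_eq_mul]
    have h3 : ∑ a : α, 2 * g a * (∑ ω : Fin D → α, ∑ i, g (ω i))
        = 2 * (∑ ω : Fin D → α, ∑ i, g (ω i)) * ∑ a, g a := by
      rw [Finset.mul_sum]
      apply Finset.sum_congr rfl
      intro a _
      ring
    rw [h3, hg]
    push_cast
    linear_combination (Fintype.card α : ℝ) * ih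

lemma key (α : Type) [Fintype α] [Nonempty α] (f : α → ℤ) (hf : ∑ a, f a < 0) :
    Tendsto (fun D : ℕ => ((univ.filter fun ω : Fin D → α => ∑ i, f (ω i) < 0).card : ℝ)
      / (Fintype.card (Fin D → α) : ℝ)) atTop (nhds 1) := by
  set A : ℝ := (Fintype.card α : ℝ) with hAdef
  have hA : 0 < A := by
    rw [hAdef]; exact_mod_cast Fintype.card_pos
  set μ : ℝ := (∑ a, (f a : ℝ)) / A with hμdef
  have hμ : μ < 0 := by
    apply div_neg_of_neg_of_pos _ hA
    have : ((∑ a, f a : ℤ) : ℝ) < 0 := by exact_mod_cast hf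
    push_cast at this
    exact this
  set g : α → ℝ := fun a => (f a : ℝ) - μ with hgdef
  have hg : ∑ a, g a = 0 := by
    simp only [hgdef, Finset.sum_sub_distrib, Finset.sum_const, Finset.card_univ,
      nsmul_eq_mul]
    rw [hμdef]
    field_simp
    rw [hAdef]; ring
  set V : ℝ := ∑ a, (g a)^2 with hVdef
  have hV : 0 ≤ V := by positivity
  have hbad : ∀ D : ℕ,
      ((univ.filter fun ω : Fin D → α => ¬ (∑ i, f (ω i) < 0)).card : ℝ) * ((D:ℝ)^2 * μ^2) * A
        ≤ D * A^D * V := by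
    intro D
    rw [← sum_sq_mul α g hg D]
    apply mul_le_mul_of_nonneg_right _ hA.le
    have h1 : ∀ ω ∈ univ.filter fun ω : Fin D → α => ¬ (∑ i, f (ω i) < 0),
        (D:ℝ)^2*μ^2 ≤ (∑ i, g (ω i))^2 := by
      intro ω hω
      have h0 : (0:ℝ) ≤ ∑ i, (f (ω i):ℝ) := by
        have := (Finset.mem_filter.mp hω).2
        push_neg at this
        exact_mod_cast this
      have hsg : ∑ i, g (ω i) = (∑ i, (f (ω i):ℝ)) - D * μ := by
        simp [hgdef, Finset.sum_sub_distrib, Finset.sum_const, Finset.card_univ,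
          nsmul_eq_mul]
      have h2 : (D:ℝ) * (-μ) ≤ ∑ i, g (ω i) := by rw [hsg]; nlinarith
      have h3 : (0:ℝ) ≤ (D:ℝ) * (-μ) := mul_nonneg (Nat.cast_nonneg D) (by linarith)
      calc (D:ℝ)^2*μ^2 = ((D:ℝ)*(-μ))^2 := by ring
        _ ≤ (∑ i, g (ω i))^2 := pow_le_pow_left₀ h3 h2 2
    calc ((univ.filter fun ω : Fin D → α => ¬ (∑ i, f (ω i) < 0)).card : ℝ) * ((D:ℝ)^2 * μ^2)
        = ∑ _ω ∈ univ.filter fun ω : Fin D → α => ¬ (∑ i, f (ω i) < 0), (D:ℝ)^2 * μ^2 := by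
          rw [Finset.sum_const, nsmul_eq_mul]
      _ ≤ ∑ ω ∈ univ.filter fun ω : Fin D → α => ¬ (∑ i, f (ω i) < 0), (∑ i, g (ω i))^2 :=
          Finset.sum_le_sum h1
      _ ≤ ∑ ω : Fin D → α, (∑ i, g (ω i))^2 :=
          Finset.sum_le_sum_of_subset_of_nonneg (Finset.filter_subset _ _)
            (fun ω _ _ => sq_nonneg _)
  have hb0 : Tendsto (fun D : ℕ =>
      ((univ.filter fun ω : Fin D → α => ¬ (∑ i, f (ω i) < 0)).card : ℝ) / A^D)
      atTop (nhds 0) := by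
    apply squeeze_zero' (Filter.Eventually.of_forall fun D => by positivity)
    · filter_upwards [eventually_ge_atTop 1] with D hD
      have hDpos : (0:ℝ) < D := by exact_mod_cast hD
      set B : ℝ := ((univ.filter fun ω : Fin D → α => ¬ (∑ i, f (ω i) < 0)).card : ℝ)
      have hBnn : 0 ≤ B := Nat.cast_nonneg _
      have hkey : B * (D:ℝ) * (μ^2*A) ≤ V * A^D := by
        have h' : (D:ℝ) * (B * (D:ℝ) * (μ^2*A)) ≤ (D:ℝ) * (V * A^D) := by
          have := hbad D; nlinarith [this]
        exact le_of_mul_le_mul_left h' hDpos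
      show B / A^D ≤ V/(μ^2*A) / D
      rw [div_le_div_iff₀ (by positivity) hDpos]
      have hμ2 : (0:ℝ) < μ^2 := by nlinarith [hμ]
      calc B * (D:ℝ) ≤ V * A^D / (μ^2*A) := by
            rw [le_div_iff₀ (mul_pos hμ2 hA)]; exact hkey
        _ = V/(μ^2*A) * A^D := by ring
    · exact tendsto_const_div_atTop_nhds_zero_nat _
  have heq : (fun D : ℕ => ((univ.filter fun ω : Fin D → α => ∑ i, f (ω i) < 0).card : ℝ)
      / (Fintype.card (Fin D → α) : ℝ))
      = fun D : ℕ => 1 - ((univ.filter fun ω : Fin D → α => ¬ (∑ i, f (ω i) < 0)).card : ℝ) / A^D := by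
    funext D
    have hcard : Fintype.card (Fin D → α) = Fintype.card α ^ D := by
      rw [Fintype.card_fun, Fintype.card_fin]
    have hsplit := Finset.card_filter_add_card_filter_not
      (s := (univ : Finset (Fin D → α))) (p := fun ω => ∑ i, f (ω i) < 0)
    simp only [not_lt] at hsplit ⊢
    rw [Finset.card_univ, hcard] at hsplit
    have hAD : (0:ℝ) < A^D := by positivity
    have hADcast : ((Fintype.card α ^ D : ℕ) : ℝ) = A^D := by push_cast [hAdef]; ring
    have hsplit' : ((univ.filter fun ω : Fin D → α => ∑ i, f (ω i) < 0).card : ℝ)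
        + ((univ.filter fun ω : Fin D → α => 0 ≤ ∑ i, f (ω i)).card : ℝ) = A^D := by
      rw [← hADcast]; exact_mod_cast hsplit
    rw [hcard, hADcast]
    field_simp
    linarith [hsplit']
  rw [heq]
  have := tendsto_const_nhds (x := (1:ℝ)) (f := atTop (α := ℕ)) |>.sub hb0
  simpa using this

def majv {N : ℕ} (s : Fin N → Bool) : ℤ := if 0 < ∑ k, pm (s k) then 1 else -1

def fZ {N : ℕ} (n : Fin N) (a : (Fin N → Bool) × Bool) : ℤ :=
  (if majv a.1 ≠ pm (a.1 n) then 1 else 0) - (if majv a.1 ≠ pm a.2 then 1 else 0)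

lemma dis_lt {N : ℕ} (hN : Odd N) (n : Fin N) :
    (univ.filter fun s : Fin N → Bool => majv s ≠ pm (s n)).card <
    (univ.filter fun s : Fin N → Bool => majv s = pm (s n)).card := by
  classical
  set T : (Fin N → Bool) → ℤ := fun s => ∑ k ∈ univ.erase n, pm (s k) with hTdef
  have hsum : ∀ s : Fin N → Bool, ∑ k, pm (s k) = pm (s n) + T s := fun s =>
    (Finset.add_sum_erase univ (fun k => pm (s k)) (mem_univ n)).symm
  set flip : (Fin N → Bool) → (Fin N → Bool) :=
    fun s => Function.update s n (!s n) with hflipdef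
  have hflipn : ∀ s, flip s n = !s n := fun s => Function.update_self n _ s
  have hflipk : ∀ s, ∀ k ≠ n, flip s k = s k := fun s k hk => Function.update_of_ne hk _ s
  have hTflip : ∀ s, T (flip s) = T s := by
    intro s
    apply Finset.sum_congr rfl
    intro k hk
    rw [hflipk s k (mem_erase.mp hk).1]
  have hinv : Function.Involutive flip := by
    intro s
    funext k
    by_cases hk : k = n
    · subst hk; rw [hflipn, hflipn, Bool.not_not]
    · rw [hflipk _ k hk, hflipk _ k hk]
  -- flip maps Disagree into Agree
  have hDA : ∀ s : Fin N → Bool, majv s ≠ pm (s n) → majv (flip s) = pm (flip s n) := by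
    intro s hs
    rw [hflipn]
    unfold majv at hs ⊢
    rw [hsum s] at hs
    rw [hsum (flip s), hTflip, hflipn]
    cases h : s n
    · -- s n = false: disagree means majv = 1 ≠ -1, so 0 < -1 + T s
      rw [h] at hs
      simp only [pm] at hs ⊢
      by_cases hpos : (0:ℤ) < -1 + T s
      · have : (0:ℤ) < 1 + T s := by omega
        simp [this]
      · simp [hpos] at hs
    · rw [h] at hs
      simp only [pm] at hs ⊢
      by_cases hpos : (0:ℤ) < 1 + T s
      · simp [hpos] at hs
      · have : ¬ (0:ℤ) < -1 + T s := by omega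
        simp [this]
  -- witness
  obtain ⟨m, hm⟩ := hN
  have hcard_erase : (univ.erase n).card = 2 * m := by
    rw [Finset.card_erase_of_mem (mem_univ n), Finset.card_univ, Fintype.card_fin]
    omega
  obtain ⟨t, hts, htc⟩ := Finset.exists_subset_card_eq (s := univ.erase n) (n := m) (by omega)
  set w : Fin N → Bool := fun k => decide (k ∈ t) with hwdef
  have hwn : w n = false := by
    simp only [hwdef, decide_eq_false_iff_not]
    intro h
    exact (Finset.mem_erase.mp (hts h)).1 rfl
  have hTw : T w = 0 := by
    have h1 : T w = ∑ k ∈ univ.erase n, ((2 * (if k ∈ t then (1:ℤ) else 0)) - 1) := by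
      apply Finset.sum_congr rfl
      intro k _
      by_cases h : k ∈ t <;> simp [hwdef, pm, h]
    rw [h1, Finset.sum_sub_distrib, ← Finset.mul_sum, Finset.sum_boole, Finset.sum_const,
      nsmul_eq_mul, mul_one]
    have : (univ.erase n).filter (· ∈ t) = t := by
      rw [Finset.filter_mem_eq_inter, Finset.inter_eq_right.mpr hts]
    rw [this, htc, hcard_erase]
    push_cast
    ring
  have hwagree : majv w = pm (w n) := by
    unfold majv
    rw [hsum w, hTw, hwn]
    norm_num [pm]
  have hfwagree : majv (flip w) = pm (flip w n) := by
    unfold majv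
    rw [hsum (flip w), hTflip, hTw, hflipn, hwn]
    norm_num [pm]
  -- counting
  have hwA : w ∈ univ.filter fun s : Fin N → Bool => majv s = pm (s n) :=
    Finset.mem_filter.mpr ⟨mem_univ _, hwagree⟩
  have himg : (univ.filter fun s : Fin N → Bool => majv s ≠ pm (s n)).image flip
      ⊆ (univ.filter fun s : Fin N → Bool => majv s = pm (s n)).erase w := by
    intro x hx
    obtain ⟨s, hs, rfl⟩ := Finset.mem_image.mp hx
    have hsD := (Finset.mem_filter.mp hs).2
    apply Finset.mem_erase.mpr
    constructor
    · intro h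
      apply hsD
      have : s = flip w := by rw [← h, hinv s]
      rw [this, hfwagree]
    · exact Finset.mem_filter.mpr ⟨mem_univ _, hDA s hsD⟩
  calc (univ.filter fun s : Fin N → Bool => majv s ≠ pm (s n)).card
      = ((univ.filter fun s : Fin N → Bool => majv s ≠ pm (s n)).image flip).card :=
        (Finset.card_image_of_injective _ hinv.injective).symm
    _ ≤ ((univ.filter fun s : Fin N → Bool => majv s = pm (s n)).erase w).card :=
        Finset.card_le_card himg
    _ < (univ.filter fun s : Fin N → Bool => majv s = pm (s n)).card :=
        Finset.card_erase_lt_of_mem hwA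

lemma fZ_sum_neg {N : ℕ} (hN : Odd N) (n : Fin N) : ∑ a, fZ n a < 0 := by
  classical
  rw [Fintype.sum_prod_type]
  have hb : ∀ s : Fin N → Bool,
      ∑ b : Bool, fZ n (s, b)
        = 2 * (if majv s ≠ pm (s n) then (1:ℤ) else 0) - 1 := by
    intro s
    rw [Fintype.sum_bool]
    unfold fZ
    simp only
    have : (if majv s ≠ pm true then (1:ℤ) else 0) + (if majv s ≠ pm false then (1:ℤ) else 0) = 1 := by
      by_cases h : 0 < ∑ k, pm (s k)
      · rw [show majv s = 1 from if_pos h]; norm_num [pm]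
      · rw [show majv s = -1 from if_neg h]; norm_num [pm]
    omega
  rw [Finset.sum_congr rfl (fun s _ => hb s), Finset.sum_sub_distrib, ← Finset.mul_sum,
    Finset.sum_boole, Finset.sum_const, nsmul_eq_mul, mul_one, Finset.card_univ]
  have hlt := dis_lt hN n
  have hsplit := Finset.card_filter_add_card_filter_not
    (s := (univ : Finset (Fin N → Bool))) (p := fun s => majv s ≠ pm (s n))
  simp only [not_not] at hsplit
  rw [Finset.card_univ] at hsplit
  have h1 : 2 * (univ.filter fun s : Fin N → Bool => majv s ≠ pm (s n)).card
      < Fintype.card (Fin N → Bool) := by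
    calc 2 * (univ.filter fun s : Fin N → Bool => majv s ≠ pm (s n)).card
        = (univ.filter fun s : Fin N → Bool => majv s ≠ pm (s n)).card
          + (univ.filter fun s : Fin N → Bool => majv s ≠ pm (s n)).card := two_mul _
      _ < (univ.filter fun s : Fin N → Bool => majv s ≠ pm (s n)).card
          + (univ.filter fun s : Fin N → Bool => majv s = pm (s n)).card :=
          Nat.add_lt_add_left hlt _
      _ = Fintype.card (Fin N → Bool) := hsplit
  have h2 : (2 * ((univ.filter fun s : Fin N → Bool => majv s ≠ pm (s n)).card : ℤ))
      < (Fintype.card (Fin N → Bool) : ℤ) := by exact_mod_cast h1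
  simp only [ne_eq] at h2 ⊢
  linarith

def colEquiv (N D : ℕ) : ((Fin N → Fin D → Bool) × (Fin D → Bool)) ≃ (Fin D → (Fin N → Bool) × Bool) where
  toFun p := fun i => (fun k => p.1 k i, p.2 i)
  invFun ω := (fun k i => (ω i).1 k, fun i => (ω i).2)
  left_inv p := rfl
  right_inv ω := rfl

/-- With N odd, S^(1),…,S^(N), S* independent uniformly random hypervectors in {-1,+1}^D
and C their coordinatewise majority, for each fixed n,
P(d_H(C, S^(n)) < d_H(C, S*)) → 1 as D → ∞. -/
theorem stmt8 (N : ℕ) (hN : Odd N) (n : Fin N) :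
    Tendsto (fun D : ℕ =>
      ((Finset.univ.filter (fun p : (Fin N → Fin D → Bool) × (Fin D → Bool) =>
          hdist (maj (fun k j => pm (p.1 k j))) (fun i => pm (p.1 n i))
            < hdist (maj (fun k j => pm (p.1 k j))) (fun i => pm (p.2 i)))).card : ℝ)
        / (Fintype.card ((Fin N → Fin D → Bool) × (Fin D → Bool)) : ℝ))
      atTop (nhds 1) := by
  classical
  have hkey := key ((Fin N → Bool) × Bool) (fZ n) (fZ_sum_neg hN n)
  refine Filter.Tendsto.congr' ?_ hkey
  filter_upwards [eventually_ge_atTop 1] with D hD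
  have hD0 : (0:ℝ) < D := by exact_mod_cast hD
  set e := colEquiv N D with hedef
  have hiff : ∀ p : (Fin N → Fin D → Bool) × (Fin D → Bool),
      (hdist (maj (fun k j => pm (p.1 k j))) (fun i => pm (p.1 n i))
        < hdist (maj (fun k j => pm (p.1 k j))) (fun i => pm (p.2 i)))
      ↔ ∑ i, fZ n (e p i) < 0 := by
    intro p
    have hx : ((univ.filter fun i : Fin D =>
        maj (fun k j => pm (p.1 k j)) i ≠ pm (p.1 n i)).card : ℤ)
        = ∑ i, (if maj (fun k j => pm (p.1 k j)) i ≠ pm (p.1 n i) then (1:ℤ) else 0) := by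
      rw [Finset.sum_boole]
    have hy : ((univ.filter fun i : Fin D =>
        maj (fun k j => pm (p.1 k j)) i ≠ pm (p.2 i)).card : ℤ)
        = ∑ i, (if maj (fun k j => pm (p.1 k j)) i ≠ pm (p.2 i) then (1:ℤ) else 0) := by
      rw [Finset.sum_boole]
    have hsum : ∑ i, fZ n (e p i)
        = ((univ.filter fun i : Fin D =>
            maj (fun k j => pm (p.1 k j)) i ≠ pm (p.1 n i)).card : ℤ)
          - ((univ.filter fun i : Fin D =>
            maj (fun k j => pm (p.1 k j)) i ≠ pm (p.2 i)).card : ℤ) := by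
      rw [hx, hy, ← Finset.sum_sub_distrib]
      apply Finset.sum_congr rfl
      intro i _
      rfl
    unfold hdist
    rw [div_lt_div_iff_of_pos_right hD0, Nat.cast_lt]
    constructor
    · intro h
      rw [hsum]
      have : ((univ.filter fun i : Fin D =>
          maj (fun k j => pm (p.1 k j)) i ≠ pm (p.1 n i)).card : ℤ)
          < ((univ.filter fun i : Fin D =>
          maj (fun k j => pm (p.1 k j)) i ≠ pm (p.2 i)).card : ℤ) := by exact_mod_cast h
      linarith
    · intro h
      rw [hsum] at h
      have : ((univ.filter fun i : Fin D =>
          maj (fun k j => pm (p.1 k j)) i ≠ pm (p.1 n i)).card : ℤ)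
          < ((univ.filter fun i : Fin D =>
          maj (fun k j => pm (p.1 k j)) i ≠ pm (p.2 i)).card : ℤ) := by linarith
      exact_mod_cast this
  have hnum : (univ.filter (fun p : (Fin N → Fin D → Bool) × (Fin D → Bool) =>
          hdist (maj (fun k j => pm (p.1 k j))) (fun i => pm (p.1 n i))
            < hdist (maj (fun k j => pm (p.1 k j))) (fun i => pm (p.2 i)))).card
      = (univ.filter fun ω : Fin D → (Fin N → Bool) × Bool => ∑ i, fZ n (ω i) < 0).card := by
    rw [← Fintype.card_subtype, ← Fintype.card_subtype]
    exact Fintype.card_congr (Equiv.subtypeEquiv e hiff)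
  have hden : Fintype.card (Fin D → (Fin N → Bool) × Bool)
      = Fintype.card ((Fin N → Fin D → Bool) × (Fin D → Bool)) :=
    Fintype.card_congr e.symm
  rw [← hnum, hden]
end

section
/- Majority of mostly-agreeing inputs: let d be odd, and fix a coordinate. Suppose T^1,…,T^d and U^1,…,U^d are ±1-valued random variables at that coordinate such that the pairs (T^k, U^k) are independent across k, each T^k is uniform on {-1,+1}, and P(U^k ≠ T^k) = δ for each k. Then the probability that the majorities differ, P([Σ_k T^k] ≠ [Σ_k U^k]), is a monotonically nondecreasing function of δ on [0, 1/2] that equals 0 at δ = 0. -/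
/-- Sign/majority of an integer sum (nonzero when the number of ±1 summands is odd). -/
def msign (x : ℤ) : ℤ := if 0 < x then 1 else -1

namespace S16

noncomputable def pmR (b : Bool) : ℝ := if b then 1 else -1

noncomputable def F (d : ℕ) (t : Fin d → Bool) : ℝ := ((msign (∑ k, pm (t k)) : ℤ) : ℝ)

noncomputable def chi {d : ℕ} (S : Finset (Fin d)) (t : Fin d → Bool) : ℝ :=
  ∏ k ∈ S, pmR (t k)

noncomputable def c (d : ℕ) (S : Finset (Fin d)) : ℝ :=
  (1 / 2 ^ d) * ∑ t : Fin d → Bool, F d t * chi S t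

noncomputable def G (d : ℕ) (ρ : ℝ) : ℝ := ∑ S : Finset (Fin d), ρ ^ S.card * (c d S) ^ 2

lemma msign_cases (x : ℤ) : msign x = 1 ∨ msign x = -1 := by
  unfold msign; split <;> simp

lemma indicator_eq (x y : ℤ) :
    (if msign x ≠ msign y then (1 : ℝ) else 0)
      = (1 - ((msign x : ℤ) : ℝ) * ((msign y : ℤ) : ℝ)) / 2 := by
  rcases msign_cases x with h1 | h1 <;> rcases msign_cases y with h2 | h2 <;>
    rw [h1, h2] <;> norm_num

lemma pmR_not_xor (a b : Bool) : pmR (!(xor a b)) = pmR a * pmR b := by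
  cases a <;> cases b <;> simp [pmR]

lemma weight_eq (δ : ℝ) (b : Bool) :
    (if b then δ else 1 - δ) = (1 + pmR (!b) * (1 - 2 * δ)) / 2 := by
  cases b <;> simp [pmR] <;> ring

lemma sum_weights (d : ℕ) (δ : ℝ) :
    ∑ f : Fin d → Bool, ∏ k, (if f k then δ else 1 - δ) = 1 := by
  have h := Finset.prod_univ_sum (fun _ : Fin d => (Finset.univ : Finset Bool))
    (fun _ b => if b then δ else (1 : ℝ) - δ)
  rw [Fintype.piFinset_univ] at h
  rw [← h]
  simp

lemma prod_weight_expand (d : ℕ) (δ : ℝ) (f : Fin d → Bool) :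
    ∏ k, (if f k then δ else 1 - δ)
      = (1 / 2 ^ d) * ∑ S : Finset (Fin d),
          (1 - 2 * δ) ^ S.card * ∏ k ∈ S, pmR (!(f k)) := by
  simp only [weight_eq δ]
  rw [Finset.prod_div_distrib, Finset.prod_const]
  have : ∏ k : Fin d, (1 + pmR (!(f k)) * (1 - 2 * δ))
      = ∑ S : Finset (Fin d), (1 - 2 * δ) ^ S.card * ∏ k ∈ S, pmR (!(f k)) := by
    have h := Finset.prod_add (fun k : Fin d => pmR (!(f k)) * (1 - 2 * δ))
      (fun _ => (1 : ℝ)) Finset.univ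
    simp only [Finset.prod_const_one, mul_one, Finset.powerset_univ] at h
    rw [show (∏ k : Fin d, (1 + pmR (!(f k)) * (1 - 2 * δ)))
        = ∏ k : Fin d, (pmR (!(f k)) * (1 - 2 * δ) + 1) by
      apply Finset.prod_congr rfl; intros; ring]
    rw [h]
    apply Finset.sum_congr rfl
    intro S _
    rw [Finset.prod_mul_distrib, Finset.prod_const]
    ring
  rw [Finset.card_univ, Fintype.card_fin, this]
  ring

def xorEquiv (d : ℕ) (t : Fin d → Bool) : (Fin d → Bool) ≃ (Fin d → Bool) where
  toFun f := fun k => xor (f k) (t k)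
  invFun f := fun k => xor (f k) (t k)
  left_inv f := by funext k; simp [Bool.xor_assoc]
  right_inv f := by funext k; simp [Bool.xor_assoc]

lemma triple {α γ : Type*} [Fintype α] [Fintype γ] (A B : α → γ → ℝ) :
    (∑ t : α, ∑ u : α, ∑ S : γ, A t S * B u S) = ∑ S : γ, (∑ t, A t S) * (∑ u, B u S) := by
  have h : ∀ t : α, (∑ u : α, ∑ S : γ, A t S * B u S) = ∑ S : γ, A t S * ∑ u, B u S := by
    intro t
    rw [Finset.sum_comm]
    exact Finset.sum_congr rfl fun S _ => (Finset.mul_sum _ _ _).symm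
  simp only [h]
  rw [Finset.sum_comm]
  exact Finset.sum_congr rfl fun S _ => (Finset.sum_mul _ _ _).symm

lemma S2_eq (d : ℕ) (δ : ℝ) :
    (∑ t : Fin d → Bool, ∑ f : Fin d → Bool,
      ((1 / 2 ^ d : ℝ) * ∏ k, (if f k then δ else 1 - δ)) *
        (F d t * F d (fun k => xor (f k) (t k))))
    = G d (1 - 2 * δ) := by
  have key : ∀ t : Fin d → Bool,
      (∑ f : Fin d → Bool,
        ((1 / 2 ^ d : ℝ) * ∏ k, (if f k then δ else 1 - δ)) *
          (F d t * F d (fun k => xor (f k) (t k))))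
      = ∑ u : Fin d → Bool, ∑ S : Finset (Fin d),
          ((1 - 2 * δ) ^ S.card * ((1 / 2 ^ d) * (F d t * chi S t))) *
            ((1 / 2 ^ d) * (F d u * chi S u)) := by
    intro t
    apply Fintype.sum_equiv (xorEquiv d t)
    intro f
    have he : (xorEquiv d t) f = fun k => xor (f k) (t k) := rfl
    rw [he, prod_weight_expand, Finset.mul_sum, Finset.mul_sum, Finset.sum_mul]
    apply Finset.sum_congr rfl
    intro S _
    have hprod : chi S (fun k => xor (f k) (t k)) * chi S t = ∏ k ∈ S, pmR (!(f k)) := by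
      unfold chi
      rw [← Finset.prod_mul_distrib]
      apply Finset.prod_congr rfl
      intro k _
      rw [← pmR_not_xor]
      congr 1
      simp [Bool.xor_assoc]
    rw [← hprod]
    ring
  simp only [key]
  rw [triple]
  unfold G
  apply Finset.sum_congr rfl
  intro S _
  have h1 : (∑ t : Fin d → Bool,
      (1 - 2 * δ) ^ S.card * ((1 / 2 ^ d : ℝ) * (F d t * chi S t)))
      = (1 - 2 * δ) ^ S.card * c d S := by
    rw [← Finset.mul_sum, ← Finset.mul_sum]; rfl
  have h2 : (∑ u : Fin d → Bool, ((1 / 2 ^ d : ℝ) * (F d u * chi S u))) = c d S := by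
    rw [← Finset.mul_sum]; rfl
  rw [h1, h2]
  ring

lemma g_eq (d : ℕ) (δ : ℝ) :
    (∑ tf : (Fin d → Bool) × (Fin d → Bool),
        ((1 / 2 ^ d) * ∏ k : Fin d, (if tf.2 k then δ else 1 - δ)) *
          (if msign (∑ k, pm (tf.1 k))
              ≠ msign (∑ k, (if tf.2 k then -pm (tf.1 k) else pm (tf.1 k)))
           then (1 : ℝ) else 0))
    = 1 / 2 - G d (1 - 2 * δ) / 2 := by
  have hpm : ∀ b a : Bool, (if b then -pm a else pm a) = pm (xor b a) := by decide
  rw [Fintype.sum_prod_type]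
  have step1 : ∀ t f : Fin d → Bool,
      ((1 / 2 ^ d : ℝ) * ∏ k, (if f k then δ else 1 - δ)) *
        (if msign (∑ k, pm (t k))
            ≠ msign (∑ k, (if f k then -pm (t k) else pm (t k)))
         then (1 : ℝ) else 0)
      = ((1 / 2 ^ d) * ∏ k, (if f k then δ else 1 - δ)) * (1 / 2)
        - (1 / 2) * (((1 / 2 ^ d) * ∏ k, (if f k then δ else 1 - δ)) *
            (F d t * F d (fun k => xor (f k) (t k)))) := by
    intro t f
    have h2 : (∑ k, (if f k then -pm (t k) else pm (t k))) = ∑ k, pm (xor (f k) (t k)) :=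
      Finset.sum_congr rfl fun k _ => hpm (f k) (t k)
    rw [h2, indicator_eq]
    unfold F
    ring
  simp only [step1]
  simp only [Finset.sum_sub_distrib]
  have hA : (∑ t : Fin d → Bool, ∑ f : Fin d → Bool,
      ((1 / 2 ^ d : ℝ) * ∏ k, (if f k then δ else 1 - δ)) * (1 / 2)) = 1 / 2 := by
    have : ∀ t : Fin d → Bool, (∑ f : Fin d → Bool,
        ((1 / 2 ^ d : ℝ) * ∏ k, (if f k then δ else 1 - δ)) * (1 / 2))
        = (1 / 2 ^ d) * (1 / 2) := by
      intro t
      rw [← Finset.sum_mul, ← Finset.mul_sum, sum_weights]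
      ring
    rw [Finset.sum_congr rfl fun t _ => this t]
    rw [Finset.sum_const, Finset.card_univ]
    have : Fintype.card (Fin d → Bool) = 2 ^ d := by simp
    rw [this]
    push_cast
    field_simp
    rw [nsmul_eq_mul]; push_cast; field_simp
  have hB : (∑ t : Fin d → Bool, ∑ f : Fin d → Bool,
      (1 / 2 : ℝ) * (((1 / 2 ^ d) * ∏ k, (if f k then δ else 1 - δ)) *
        (F d t * F d (fun k => xor (f k) (t k)))))
      = (1 / 2) * G d (1 - 2 * δ) := by
    rw [← S2_eq d δ]
    simp only [Finset.mul_sum]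
  rw [hA, hB]
  ring

end S16

/-- Majority of mostly-agreeing inputs: with d odd, T^1,…,T^d i.i.d. uniform ±1 and
U^k = T^k flipped independently with probability δ, the probability that the majorities
of the T's and of the U's differ is a monotone nondecreasing function of δ on [0, 1/2]
which vanishes at δ = 0. -/
theorem stmt16 (d : ℕ) (hd : Odd d) :
    let g : ℝ → ℝ := fun δ =>
      ∑ tf : (Fin d → Bool) × (Fin d → Bool),
        ((1 / 2 ^ d) * ∏ k : Fin d, (if tf.2 k then δ else 1 - δ)) *
          (if msign (∑ k, pm (tf.1 k))
              ≠ msign (∑ k, (if tf.2 k then -pm (tf.1 k) else pm (tf.1 k)))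
           then (1 : ℝ) else 0)
    MonotoneOn g (Set.Icc (0 : ℝ) (1/2)) ∧ g 0 = 0 := by
  intro g
  constructor
  · intro a ha b hb hab
    have hga : g a = 1 / 2 - S16.G d (1 - 2 * a) / 2 := S16.g_eq d a
    have hgb : g b = 1 / 2 - S16.G d (1 - 2 * b) / 2 := S16.g_eq d b
    rw [hga, hgb]
    have hG : S16.G d (1 - 2 * b) ≤ S16.G d (1 - 2 * a) := by
      unfold S16.G
      apply Finset.sum_le_sum
      intro S _
      apply mul_le_mul_of_nonneg_right _ (sq_nonneg _)
      apply pow_le_pow_left₀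
      · linarith [hb.2]
      · linarith
    linarith
  · show (∑ tf : (Fin d → Bool) × (Fin d → Bool), _) = (0 : ℝ)
    apply Finset.sum_eq_zero
    intro tf _
    by_cases h : ∃ k, tf.2 k = true
    · obtain ⟨k, hk⟩ := h
      have hz : (∏ k : Fin d, (if tf.2 k then (0 : ℝ) else 1 - 0)) = 0 :=
        Finset.prod_eq_zero (Finset.mem_univ k) (by simp [hk])
      rw [hz]
      ring
    · push_neg at h
      have hf : ∀ k, tf.2 k = false := fun k => Bool.eq_false_iff.mpr (h k)
      have hsum : (∑ k, (if tf.2 k then -pm (tf.1 k) else pm (tf.1 k)))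
          = ∑ k, pm (tf.1 k) :=
        Finset.sum_congr rfl fun k _ => by rw [hf k]; simp
      rw [hsum]
      simp
end
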